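/- Let p ∈ [1, ∞), N real with N ≤ d/p, and suppose u : ℤ^d → ℂ has the form u(g) = ∑_{r=1}^ℓ c_r e^{i k_r · g} for distinct quasimomenta k₁, …, k_ℓ ∈ [−π,π)^d and constants c_r ∈ ℂ. If ∑_{g ∈ ℤ^d} |u(g)|^p ⟨g⟩^{−pN} < ∞, then all c_r = 0 and hence u ≡ 0. -/

import Mathlib

open Complex

/-- The Japanese bracket `⟨g⟩ = (1 + |g|²)^(1/2)` for `g ∈ ℤ^d`. -/
noncomputable def jbracket {d : ℕ} (g : Fin d → ℤ) : ℝ :=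
  Real.sqrt (1 + ∑ i, ((g i : ℝ)) ^ 2)

set_option maxHeartbeats 1000000
open Finset

theorem dirichlet_bound (n : ℕ) (t : ℝ) (h : Complex.exp (t * I) ≠ 1) :
    ‖∑ m ∈ Finset.Icc (-(n:ℤ)) n, Complex.exp ((t * m : ℝ) * I)‖
      ≤ 2 / ‖Complex.exp (t * I) - 1‖ := by
  have himg : Finset.Icc (-(n:ℤ)) n = (Finset.range (2*n+1)).image (fun j : ℕ => (j:ℤ) - n) := by
    ext m
    simp only [Finset.mem_Icc, Finset.mem_image, Finset.mem_range]
    constructor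
    · intro hm; refine ⟨(m + n).toNat, by omega, by omega⟩
    · rintro ⟨j, hj, rfl⟩; omega
  have hinj : ∀ x ∈ Finset.range (2*n+1), ∀ y ∈ Finset.range (2*n+1),
      ((x:ℤ) - n = (y:ℤ) - n) → x = y := by intro x _ y _ hxy; omega
  rw [himg, Finset.sum_image hinj]
  have hterm : ∀ j ∈ Finset.range (2*n+1), Complex.exp ((t * ((((j:ℤ) - n : ℤ)) : ℝ) : ℝ) * I)
      = Complex.exp (t*I) ^ j * Complex.exp ((-(t*n) : ℝ) * I) := by
    intro j _
    rw [← Complex.exp_nat_mul, ← Complex.exp_add]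
    congr 1
    push_cast
    ring
  rw [Finset.sum_congr rfl hterm, ← Finset.sum_mul, geom_sum_eq h]
  rw [norm_mul, Complex.norm_exp_ofReal_mul_I, mul_one, norm_div]
  gcongr
  calc ‖Complex.exp (t*I) ^ (2*n+1) - 1‖
      ≤ ‖Complex.exp (t*I) ^ (2*n+1)‖ + ‖(1:ℂ)‖ :=
        norm_sub_le _ _
    _ ≤ 2 := by
        rw [norm_pow, Complex.norm_exp_ofReal_mul_I]
        norm_num

theorem exp_ne_one_of_ne (a b : ℝ) (ha : a ∈ Set.Ico (-Real.pi) Real.pi)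
    (hb : b ∈ Set.Ico (-Real.pi) Real.pi) (hab : a ≠ b) :
    Complex.exp ((a - b : ℝ) * I) ≠ 1 := by
  intro h
  rw [Complex.exp_eq_one_iff] at h
  obtain ⟨m, hm⟩ := h
  have hI : (((a - b : ℝ)) : ℂ) = ((2 * Real.pi * m : ℝ) : ℂ) := by
    have hI0 : (I : ℂ) ≠ 0 := Complex.I_ne_zero
    have : ((a - b : ℝ) : ℂ) * I = ((2 * Real.pi * m : ℝ) : ℂ) * I := by
      rw [hm]; push_cast; ring
    exact mul_right_cancel₀ hI0 this
  have hr : a - b = 2 * Real.pi * m := by exact_mod_cast hI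
  have hpi := Real.pi_pos
  obtain ⟨ha1, ha2⟩ := ha
  obtain ⟨hb1, hb2⟩ := hb
  have h1 : a - b < 2 * Real.pi := by linarith
  have h2 : -(2 * Real.pi) < a - b := by linarith
  have hm1 : (m : ℝ) < 1 := by nlinarith
  have hm2 : (-1 : ℝ) < m := by nlinarith
  have hmi1 : (-1:ℤ) < m := by exact_mod_cast hm2
  have hmi2 : m < (1:ℤ) := by exact_mod_cast hm1
  have : m = 0 := by omega
  rw [this] at hr
  simp at hr
  exact hab (by linarith)

theorem key_identity (d ℓ n : ℕ) (k : Fin ℓ → Fin d → ℝ) (c : Fin ℓ → ℂ) :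
    ((∑ g ∈ Fintype.piFinset (fun _ : Fin d => Finset.Icc (-(n:ℤ)) n),
        Complex.normSq (∑ r, c r * Complex.exp (Complex.I * (∑ i, (k r i * (g i : ℝ) : ℝ)))) : ℝ) : ℂ)
      = ∑ r, ∑ s, (c r * (starRingEnd ℂ) (c s)) *
          ∏ i, ∑ m ∈ Finset.Icc (-(n:ℤ)) n, Complex.exp (((k r i - k s i) * m : ℝ) * I) := by
  have he_add : ∀ x y : ℝ, Complex.exp (x * I) * Complex.exp (y * I) = Complex.exp ((x + y : ℝ) * I) := by
    intro x y; rw [← Complex.exp_add]; push_cast; ring_nf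
  have he_conj : ∀ x : ℝ, (starRingEnd ℂ) (Complex.exp (x * I)) = Complex.exp ((-x : ℝ) * I) := by
    intro x
    rw [← Complex.exp_conj]
    congr 1
    simp [Complex.conj_I]
  have he_sum : ∀ (w : Fin d → ℝ), Complex.exp ((∑ i, w i : ℝ) * I) = ∏ i, Complex.exp (w i * I) := by
    intro w
    rw [← Complex.exp_sum]
    congr 1
    rw [Complex.ofReal_sum, Finset.sum_mul]
  have hexpand : ∀ g : Fin d → ℤ,
      ((Complex.normSq (∑ r, c r * Complex.exp (Complex.I * (∑ i, (k r i * (g i : ℝ) : ℝ)))) : ℝ) : ℂ)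
        = ∑ r, ∑ s, (c r * (starRingEnd ℂ) (c s)) *
            ∏ i, Complex.exp (((k r i - k s i) * (g i : ℝ) : ℝ) * I) := by
    intro g
    rw [← Complex.mul_conj, map_sum, Finset.sum_mul_sum]
    refine Finset.sum_congr rfl fun r _ => Finset.sum_congr rfl fun s _ => ?_
    rw [map_mul]
    rw [mul_comm Complex.I ((∑ i, (k r i * (g i : ℝ) : ℝ) : ℝ) : ℂ),
        mul_comm Complex.I ((∑ i, (k s i * (g i : ℝ) : ℝ) : ℝ) : ℂ), he_conj]
    have : c r * Complex.exp ((∑ i, k r i * (g i : ℝ) : ℝ) * I) *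
        ((starRingEnd ℂ) (c s) * Complex.exp ((-(∑ i, k s i * (g i : ℝ)) : ℝ) * I))
        = (c r * (starRingEnd ℂ) (c s)) *
          (Complex.exp ((∑ i, k r i * (g i : ℝ) : ℝ) * I) * Complex.exp ((-(∑ i, k s i * (g i : ℝ)) : ℝ) * I)) := by
      ring
    rw [this, he_add, ← he_sum]
    have hsum' : (∑ x, (k r x * (g x : ℝ) + -(k s x * (g x : ℝ)))) = ∑ i, (k r i - k s i) * (g i : ℝ) :=
      Finset.sum_congr rfl fun i _ => by ring
    rw [← Finset.sum_neg_distrib, ← Finset.sum_add_distrib, hsum']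
  rw [Complex.ofReal_sum]
  calc ∑ g ∈ Fintype.piFinset (fun _ : Fin d => Finset.Icc (-(n:ℤ)) n),
        ((Complex.normSq (∑ r, c r * Complex.exp (Complex.I * (∑ i, (k r i * (g i : ℝ) : ℝ)))) : ℝ) : ℂ)
      = ∑ g ∈ Fintype.piFinset (fun _ : Fin d => Finset.Icc (-(n:ℤ)) n),
          ∑ r, ∑ s, (c r * (starRingEnd ℂ) (c s)) *
            ∏ i, Complex.exp (((k r i - k s i) * (g i : ℝ) : ℝ) * I) :=
        Finset.sum_congr rfl fun g _ => hexpand g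
    _ = ∑ r, ∑ s, (c r * (starRingEnd ℂ) (c s)) *
          ∑ g ∈ Fintype.piFinset (fun _ : Fin d => Finset.Icc (-(n:ℤ)) n),
            ∏ i, Complex.exp (((k r i - k s i) * (g i : ℝ) : ℝ) * I) := by
        rw [Finset.sum_comm]
        refine Finset.sum_congr rfl fun r _ => ?_
        rw [Finset.sum_comm]
        refine Finset.sum_congr rfl fun s _ => ?_
        rw [Finset.mul_sum]
    _ = _ := by
        refine Finset.sum_congr rfl fun r _ => Finset.sum_congr rfl fun s _ => ?_
        congr 1
        exact (Finset.prod_univ_sum (fun _ : Fin d => Finset.Icc (-(n:ℤ)) n)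
          (fun i m => Complex.exp (((k r i - k s i) * m : ℝ) * I))).symm

theorem spectral_lower (d ℓ n : ℕ) (hd : 1 ≤ d)
    (k : Fin ℓ → Fin d → ℝ) (hk : ∀ r i, k r i ∈ Set.Ico (-Real.pi) Real.pi)
    (hdist : Function.Injective k) (c : Fin ℓ → ℂ) :
    (∑ r, Complex.normSq (c r)) * (2*(n:ℝ)+1)^d
      - (∑ r, ∑ s, ‖c r‖ * ‖c s‖ *
          (∑ i, 2 / ‖Complex.exp ((k r i - k s i : ℝ) * I) - 1‖)) * (2*(n:ℝ)+1)^(d-1)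
      ≤ ∑ g ∈ Fintype.piFinset (fun _ : Fin d => Finset.Icc (-(n:ℤ)) n),
          Complex.normSq (∑ r, c r * Complex.exp (Complex.I * (∑ i, (k r i * (g i : ℝ) : ℝ)))) := by
  classical
  set D : ℝ → ℂ := fun t => ∑ m ∈ Finset.Icc (-(n:ℤ)) n, Complex.exp ((t * m : ℝ) * I) with hD
  have hcard : (Finset.Icc (-(n:ℤ)) n).card = 2*n+1 := by
    rw [Int.card_Icc]; omega
  have hDtriv : ∀ t : ℝ, ‖D t‖ ≤ 2*(n:ℝ)+1 := by
    intro t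
    calc ‖D t‖ ≤ ∑ m ∈ Finset.Icc (-(n:ℤ)) n, ‖Complex.exp ((t * m : ℝ) * I)‖ :=
          norm_sum_le _ _
      _ = 2*(n:ℝ)+1 := by
          simp only [Complex.norm_exp_ofReal_mul_I, Finset.sum_const, hcard, nsmul_eq_mul, mul_one]
          push_cast; ring
  have hoff : ∀ r s : Fin ℓ, r ≠ s → ‖∏ i, D (k r i - k s i)‖
      ≤ (∑ i, 2 / ‖Complex.exp ((k r i - k s i : ℝ) * I) - 1‖) * (2*(n:ℝ)+1)^(d-1) := by
    intro r s hrs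
    obtain ⟨i0, hi0⟩ : ∃ i, k r i ≠ k s i := by
      by_contra hcon; push_neg at hcon; exact hrs (hdist (funext hcon))
    have hne1 := exp_ne_one_of_ne _ _ (hk r i0) (hk s i0) hi0
    rw [norm_prod, ← Finset.mul_prod_erase univ _ (Finset.mem_univ i0)]
    have h1 : ‖D (k r i0 - k s i0)‖
        ≤ 2 / ‖Complex.exp ((k r i0 - k s i0 : ℝ) * I) - 1‖ := dirichlet_bound n _ hne1
    have h2 : ∏ i ∈ univ.erase i0, ‖D (k r i - k s i)‖ ≤ (2*(n:ℝ)+1)^(d-1) := by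
      calc ∏ i ∈ univ.erase i0, ‖D (k r i - k s i)‖
          ≤ ∏ _i ∈ univ.erase i0, (2*(n:ℝ)+1) :=
            Finset.prod_le_prod (fun i _ => norm_nonneg _) (fun i _ => hDtriv _)
        _ = (2*(n:ℝ)+1)^(d-1) := by
            rw [Finset.prod_const, Finset.card_erase_of_mem (Finset.mem_univ _), Finset.card_univ,
              Fintype.card_fin]
    have h3 : 2 / ‖Complex.exp ((k r i0 - k s i0 : ℝ) * I) - 1‖
        ≤ ∑ i, 2 / ‖Complex.exp ((k r i - k s i : ℝ) * I) - 1‖ :=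
      Finset.single_le_sum (f := fun i => 2 / ‖Complex.exp ((k r i - k s i : ℝ) * I) - 1‖)
        (fun i _ => by positivity) (Finset.mem_univ i0)
    exact mul_le_mul (h1.trans h3) h2 (Finset.prod_nonneg fun i _ => norm_nonneg _)
      (Finset.sum_nonneg fun i _ => by positivity)
  have hid := key_identity d ℓ n k c
  set S2 : ℝ := ∑ g ∈ Fintype.piFinset (fun _ : Fin d => Finset.Icc (-(n:ℤ)) n),
      Complex.normSq (∑ r, c r * Complex.exp (Complex.I * (∑ i, (k r i * (g i : ℝ) : ℝ)))) with hS2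
  set F : Fin ℓ × Fin ℓ → ℂ := fun rs => (c rs.1 * (starRingEnd ℂ) (c rs.2)) *
      ∏ i, D (k rs.1 i - k rs.2 i) with hF
  have hpair : (S2 : ℂ) = ∑ x ∈ Finset.univ.diag, F x + ∑ x ∈ Finset.univ.offDiag, F x := by
    rw [← Finset.sum_union (Finset.disjoint_diag_offDiag _), Finset.diag_union_offDiag,
      hid, Finset.sum_product]
  have hD0 : D 0 = 2*(n:ℂ)+1 := by
    simp only [hD, zero_mul, Complex.ofReal_zero, Complex.exp_zero, Finset.sum_const, hcard,
      nsmul_eq_mul, mul_one]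
    push_cast; ring
  have hdiag : ∑ x ∈ Finset.univ.diag, F x
      = (((∑ r, Complex.normSq (c r)) * (2*(n:ℝ)+1)^d : ℝ) : ℂ) := by
    rw [Finset.sum_diag]
    have : ∀ r : Fin ℓ, F (r, r) = ((Complex.normSq (c r) * (2*(n:ℝ)+1)^d : ℝ) : ℂ) := by
      intro r
      simp only [hF, sub_self, hD0, Complex.mul_conj]
      rw [Finset.prod_const, Finset.card_univ, Fintype.card_fin]
      push_cast; ring
    rw [Finset.sum_congr rfl fun r _ => this r, ← Complex.ofReal_sum, ← Finset.sum_mul]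
  have hoffbd : ‖∑ x ∈ Finset.univ.offDiag, F x‖
      ≤ (∑ r, ∑ s, ‖c r‖ * ‖c s‖ *
          (∑ i, 2 / ‖Complex.exp ((k r i - k s i : ℝ) * I) - 1‖)) * (2*(n:ℝ)+1)^(d-1) := by
    calc ‖∑ x ∈ Finset.univ.offDiag, F x‖
        ≤ ∑ x ∈ Finset.univ.offDiag, ‖F x‖ := norm_sum_le _ _
      _ ≤ ∑ x ∈ Finset.univ.offDiag, (‖c x.1‖ * ‖c x.2‖ *
            (∑ i, 2 / ‖Complex.exp ((k x.1 i - k x.2 i : ℝ) * I) - 1‖)) * (2*(n:ℝ)+1)^(d-1) := by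
          refine Finset.sum_le_sum fun x hx => ?_
          have hxne : x.1 ≠ x.2 := (Finset.mem_offDiag.1 hx).2.2
          rw [hF]
          rw [norm_mul, norm_mul, Complex.norm_conj]
          have h := hoff x.1 x.2 hxne
          calc ‖c x.1‖ * ‖c x.2‖ * ‖∏ i, D (k x.1 i - k x.2 i)‖
              ≤ ‖c x.1‖ * ‖c x.2‖ *
                ((∑ i, 2 / ‖Complex.exp ((k x.1 i - k x.2 i : ℝ) * I) - 1‖) * (2*(n:ℝ)+1)^(d-1)) :=
                mul_le_mul_of_nonneg_left h (by positivity)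
            _ = _ := by ring
      _ ≤ _ := by
          rw [← Finset.sum_mul]
          have hsub : ∑ x ∈ Finset.univ.offDiag, (‖c x.1‖ * ‖c x.2‖ *
                (∑ i, 2 / ‖Complex.exp ((k x.1 i - k x.2 i : ℝ) * I) - 1‖))
              ≤ ∑ x ∈ Finset.univ ×ˢ Finset.univ, (‖c x.1‖ * ‖c x.2‖ *
                (∑ i, 2 / ‖Complex.exp ((k x.1 i - k x.2 i : ℝ) * I) - 1‖)) := by
            refine Finset.sum_le_sum_of_subset_of_nonneg
              (fun x hx => Finset.mem_product.2
                ⟨(Finset.mem_offDiag.1 hx).1, (Finset.mem_offDiag.1 hx).2.1⟩)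
              (fun x _ _ => by positivity)
          rw [Finset.sum_product] at hsub
          exact mul_le_mul_of_nonneg_right hsub (by positivity)
  have hre : S2 = ((∑ x ∈ Finset.univ.diag, F x).re + (∑ x ∈ Finset.univ.offDiag, F x).re) := by
    have := congrArg Complex.re hpair
    simpa using this
  have hdre : (∑ x ∈ Finset.univ.diag, F x).re = (∑ r, Complex.normSq (c r)) * (2*(n:ℝ)+1)^d := by
    rw [hdiag, Complex.ofReal_re]
  have hore : -(((∑ r, ∑ s, ‖c r‖ * ‖c s‖ *
      (∑ i, 2 / ‖Complex.exp ((k r i - k s i : ℝ) * I) - 1‖)) * (2*(n:ℝ)+1)^(d-1)))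
      ≤ (∑ x ∈ Finset.univ.offDiag, F x).re := by
    have h1 : -‖∑ x ∈ Finset.univ.offDiag, F x‖
        ≤ (∑ x ∈ Finset.univ.offDiag, F x).re :=
      neg_le_of_abs_le (Complex.abs_re_le_norm _)
    linarith [hoffbd]
  rw [hre] at *
  linarith [hre, hdre, hore]

theorem count_lower {α : Type*} [DecidableEq α] (s : Finset α) (f : α → ℝ) (M σ p : ℝ)
    (hM : 0 < M) (hσ : 0 < σ) (hp : 0 ≤ p)
    (h0 : ∀ x ∈ s, 0 ≤ f x) (hub : ∀ x ∈ s, f x ≤ M)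
    (hlb : (σ/2) * s.card ≤ ∑ x ∈ s, (f x)^2) :
    (σ / (4*M^2)) * (Real.sqrt σ / 2) ^ p * s.card ≤ ∑ x ∈ s, f x ^ p := by
  classical
  set t : ℝ := Real.sqrt σ / 2 with htdef
  have ht : 0 < t := by positivity
  have ht2 : t^2 = σ/4 := by
    rw [htdef, div_pow, Real.sq_sqrt hσ.le]; norm_num
  set G := s.filter (fun x => t ≤ f x) with hG
  have hsplit : ∑ x ∈ s, (f x)^2
      = ∑ x ∈ G, (f x)^2 + ∑ x ∈ s.filter (fun x => ¬ t ≤ f x), (f x)^2 :=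
    (Finset.sum_filter_add_sum_filter_not s _ _).symm
  have h2 : ∑ x ∈ G, (f x)^2 ≤ G.card * M^2 := by
    rw [← nsmul_eq_mul]
    refine Finset.sum_le_card_nsmul _ _ _ fun x hx => ?_
    have hxs := Finset.mem_of_mem_filter x hx
    exact pow_le_pow_left₀ (h0 x hxs) (hub x hxs) 2
  have h3 : ∑ x ∈ s.filter (fun x => ¬ t ≤ f x), (f x)^2 ≤ (s.card) * (σ/4) := by
    calc ∑ x ∈ s.filter (fun x => ¬ t ≤ f x), (f x)^2
        ≤ (s.filter (fun x => ¬ t ≤ f x)).card * (σ/4) := by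
          rw [← nsmul_eq_mul]
          refine Finset.sum_le_card_nsmul _ _ _ fun x hx => ?_
          have hxs := Finset.mem_of_mem_filter x hx
          have hlt : f x < t := by
            have := (Finset.mem_filter.1 hx).2
            linarith [not_le.1 this]
          rw [← ht2]
          exact pow_le_pow_left₀ (h0 x hxs) hlt.le 2
      _ ≤ s.card * (σ/4) := by
          have := Finset.card_filter_le s (fun x => ¬ t ≤ f x)
          have h4 : ((s.filter (fun x => ¬ t ≤ f x)).card : ℝ) ≤ s.card := by exact_mod_cast this
          nlinarith [hσ]
  have hcardG : (σ / (4*M^2)) * s.card ≤ G.card := by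
    have key : (σ/4) * s.card ≤ G.card * M^2 := by linarith
    rw [div_mul_eq_mul_div, div_le_iff₀ (by positivity)]
    nlinarith
  have h5 : (G.card : ℝ) * t ^ p ≤ ∑ x ∈ G, f x ^ p := by
    rw [← nsmul_eq_mul]
    refine Finset.card_nsmul_le_sum _ _ _ fun x hx => ?_
    exact Real.rpow_le_rpow ht.le (Finset.mem_filter.1 hx).2 hp
  have h6 : ∑ x ∈ G, f x ^ p ≤ ∑ x ∈ s, f x ^ p := by
    refine Finset.sum_le_sum_of_subset_of_nonneg (Finset.filter_subset _ _) fun x hxs _ => ?_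
    exact Real.rpow_nonneg (h0 x hxs) p
  have htp : 0 < t ^ p := Real.rpow_pos_of_pos ht p
  calc (σ / (4*M^2)) * t ^ p * s.card = ((σ / (4*M^2)) * s.card) * t ^ p := by ring
    _ ≤ (G.card : ℝ) * t ^ p := mul_le_mul_of_nonneg_right hcardG htp.le
    _ ≤ ∑ x ∈ G, f x ^ p := h5
    _ ≤ ∑ x ∈ s, f x ^ p := h6


/-- **Unique continuation at infinity, `p < ∞` case.** Let `p ∈ [1,∞)`, `N ≤ d/p`,
and let `u(g) = ∑_r c_r e^{i k_r · g}` for distinct quasimomenta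
`k_1, …, k_ℓ ∈ [−π,π)^d`. If `∑_{g∈ℤ^d} |u(g)|^p ⟨g⟩^{−pN} < ∞`, then all `c_r = 0`
(hence `u ≡ 0`). -/
theorem unique_continuation_at_infinity_lp (d ℓ : ℕ) (hd : 1 ≤ d)
    (p N : ℝ) (hp : 1 ≤ p) (hN : N ≤ (d : ℝ) / p)
    (k : Fin ℓ → Fin d → ℝ) (hk : ∀ r i, k r i ∈ Set.Ico (-Real.pi) Real.pi)
    (hdist : Function.Injective k)
    (c : Fin ℓ → ℂ)
    (u : (Fin d → ℤ) → ℂ)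
    (hu : ∀ g, u g = ∑ r : Fin ℓ, c r * Complex.exp (Complex.I * (∑ i, (k r i * (g i : ℝ) : ℝ))))
    (hsum : Summable (fun g : Fin d → ℤ => ‖u g‖ ^ p * jbracket g ^ (-(p * N)))) :
    (∀ r, c r = 0) ∧ ∀ g, u g = 0 := by
  classical
  suffices hc : ∀ r, c r = 0 by
    exact ⟨hc, fun g => by simp [hu g, hc]⟩
  by_contra hcon
  push_neg at hcon
  obtain ⟨r0, hr0⟩ := hcon
  -- basic constants
  have hp0 : (0:ℝ) < p := by linarith
  set σ : ℝ := ∑ r, Complex.normSq (c r) with hσdef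
  have hσ : 0 < σ := by
    refine Finset.sum_pos' (fun r _ => Complex.normSq_nonneg _) ⟨r0, Finset.mem_univ r0, ?_⟩
    exact Complex.normSq_pos.2 hr0
  set M : ℝ := ∑ r, ‖c r‖ with hMdef
  have hM : 0 < M := by
    refine Finset.sum_pos' (fun r _ => norm_nonneg _) ⟨r0, Finset.mem_univ r0, ?_⟩
    simpa using hr0
  set C : ℝ := ∑ r, ∑ s, ‖c r‖ * ‖c s‖ *
      (∑ i, 2 / ‖Complex.exp ((k r i - k s i : ℝ) * Complex.I) - 1‖) with hCdef
  have hC0 : 0 ≤ C :=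
    Finset.sum_nonneg fun r _ => Finset.sum_nonneg fun s _ => by positivity
  set Qs : ℕ → Finset (Fin d → ℤ) :=
    fun n => Fintype.piFinset (fun _ : Fin d => Finset.Icc (-(n:ℤ)) n) with hQsdef
  have hQcard : ∀ n, ((Qs n).card : ℝ) = (2*(n:ℝ)+1)^d := by
    intro n
    rw [hQsdef]
    rw [Fintype.card_piFinset]
    have : (Finset.Icc (-(n:ℤ)) n).card = 2*n+1 := by rw [Int.card_Icc]; omega
    simp only [this, Finset.prod_const, Finset.card_univ, Fintype.card_fin]
    push_cast; ring
  have hQmono : ∀ m n : ℕ, m ≤ n → Qs m ⊆ Qs n := by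
    intro m n hmn
    refine Fintype.piFinset_subset _ _ fun i => ?_
    exact Finset.Icc_subset_Icc (by exact_mod_cast neg_le_neg (Int.ofNat_le.2 hmn)) (by exact_mod_cast hmn)
  have habs_le : ∀ g, ‖u g‖ ≤ M := by
    intro g
    rw [hu g]
    calc ‖∑ r, c r * Complex.exp (Complex.I * (∑ i, (k r i * (g i : ℝ) : ℝ)))‖
        ≤ ∑ r, ‖c r * Complex.exp (Complex.I * (∑ i, (k r i * (g i : ℝ) : ℝ)))‖ :=
          norm_sum_le _ _
      _ = M := by
          rw [hMdef]
          refine Finset.sum_congr rfl fun r _ => ?_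
          rw [norm_mul]
          have : ‖Complex.exp (Complex.I * (∑ i, (k r i * (g i : ℝ) : ℝ)))‖ = 1 := by
            rw [mul_comm]
            exact Complex.norm_exp_ofReal_mul_I _
          rw [this, mul_one]
  -- step 1: lower bound on the L² sums
  have hS2low : ∀ n : ℕ, σ * (2*(n:ℝ)+1)^d - C * (2*(n:ℝ)+1)^(d-1)
      ≤ ∑ g ∈ Qs n, Complex.normSq (u g) := by
    intro n
    have := spectral_lower d ℓ n hd k hk hdist c
    have heq : ∑ g ∈ Qs n, Complex.normSq (u g)
        = ∑ g ∈ Fintype.piFinset (fun _ : Fin d => Finset.Icc (-(n:ℤ)) n),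
            Complex.normSq (∑ r, c r * Complex.exp (Complex.I * (∑ i, (k r i * (g i : ℝ) : ℝ)))) := by
      exact Finset.sum_congr rfl fun g _ => by rw [hu g]
    rw [heq]
    exact this
  obtain ⟨n0, hn0⟩ := exists_nat_ge (2*C/σ)
  have hS2half : ∀ n : ℕ, n0 ≤ n → (σ/2) * (2*(n:ℝ)+1)^d ≤ ∑ g ∈ Qs n, Complex.normSq (u g) := by
    intro n hn
    have h1 := hS2low n
    have hx : (0:ℝ) < 2*(n:ℝ)+1 := by positivity
    have hpow : (2*(n:ℝ)+1)^d = (2*(n:ℝ)+1)^(d-1) * (2*(n:ℝ)+1) := by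
      rw [← pow_succ]
      congr 1
      omega
    have hCn : C ≤ (σ/2) * (2*(n:ℝ)+1) := by
      have hn' : (2*C/σ) ≤ (n:ℝ) := le_trans hn0 (by exact_mod_cast hn)
      have : 2*C/σ ≤ 2*(n:ℝ)+1 := by linarith
      calc C = (σ/2) * (2*C/σ) := by field_simp
        _ ≤ (σ/2) * (2*(n:ℝ)+1) := by nlinarith
    have hpow_pos : (0:ℝ) < (2*(n:ℝ)+1)^(d-1) := by positivity
    nlinarith [mul_le_mul_of_nonneg_right hCn hpow_pos.le]
  -- step 2: lower bound on the Lᵖ sums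
  set c0 : ℝ := (σ / (4*M^2)) * (Real.sqrt σ / 2) ^ p with hc0def
  have hc0 : 0 < c0 := by
    have : (0:ℝ) < (Real.sqrt σ / 2) ^ p := Real.rpow_pos_of_pos (by positivity) p
    positivity
  have hSplow : ∀ n : ℕ, n0 ≤ n →
      c0 * (2*(n:ℝ)+1)^d ≤ ∑ g ∈ Qs n, ‖u g‖ ^ p := by
    intro n hn
    have hcount := count_lower (Qs n) (fun g => ‖u g‖) M σ p hM hσ hp0.le
      (fun g _ => norm_nonneg _) (fun g _ => habs_le g) ?_
    · calc c0 * (2*(n:ℝ)+1)^d = (σ / (4*M^2)) * (Real.sqrt σ / 2) ^ p * ((Qs n).card : ℝ) := by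
            rw [hQcard]
        _ ≤ _ := hcount
    · rw [hQcard]
      calc (σ/2) * (2*(n:ℝ)+1)^d ≤ ∑ g ∈ Qs n, Complex.normSq (u g) := hS2half n hn
        _ = ∑ g ∈ Qs n, ‖u g‖ ^ 2 :=
            Finset.sum_congr rfl fun g _ => (Complex.sq_norm _).symm
  have hSpub : ∀ n : ℕ, ∑ g ∈ Qs n, ‖u g‖ ^ p ≤ (2*(n:ℝ)+1)^d * M ^ p := by
    intro n
    calc ∑ g ∈ Qs n, ‖u g‖ ^ p ≤ ∑ _g ∈ Qs n, M ^ p :=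
          Finset.sum_le_sum fun g _ => Real.rpow_le_rpow (norm_nonneg _) (habs_le g) hp0.le
      _ = (2*(n:ℝ)+1)^d * M ^ p := by
          rw [Finset.sum_const, nsmul_eq_mul, hQcard]
  -- weights
  set q : ℝ := max (p*N) 0 with hqdef
  have hq0 : 0 ≤ q := le_max_right _ _
  have hqd : q ≤ (d:ℝ) := by
    have hpN : p * N ≤ (d:ℝ) := by
      have := (le_div_iff₀ hp0).1 hN
      linarith [this]
    exact max_le hpN (by positivity)
  set W : ℝ := Real.sqrt (1 + d) with hWdef
  have hW1 : 1 ≤ W := by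
    rw [hWdef, Real.one_le_sqrt]
    have : (0:ℝ) ≤ (d:ℝ) := Nat.cast_nonneg d
    linarith
  have hW0 : 0 < W := lt_of_lt_of_le one_pos hW1
  have hjb1 : ∀ g : Fin d → ℤ, 1 ≤ jbracket g := by
    intro g
    rw [jbracket, Real.one_le_sqrt]
    have : (0:ℝ) ≤ ∑ i, ((g i : ℝ))^2 := Finset.sum_nonneg fun i _ => sq_nonneg _
    linarith
  have hjb0 : ∀ g : Fin d → ℤ, 0 ≤ jbracket g := fun g => le_trans zero_le_one (hjb1 g)
  have hjb_ub : ∀ n : ℕ, 1 ≤ n → ∀ g ∈ Qs n, jbracket g ≤ W * n := by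
    intro n hn g hg
    have hmem : ∀ i, g i ∈ Finset.Icc (-(n:ℤ)) n := Fintype.mem_piFinset.1 hg
    have hsq : ∀ i, ((g i : ℝ))^2 ≤ (n:ℝ)^2 := by
      intro i
      have := Finset.mem_Icc.1 (hmem i)
      have h1 : |(g i : ℝ)| ≤ (n:ℝ) := by
        rw [abs_le]; constructor <;> [exact_mod_cast this.1; exact_mod_cast this.2]
      nlinarith [abs_nonneg ((g i : ℝ)), _root_.sq_abs ((g i):ℝ)]
    have hsum2 : 1 + ∑ i, ((g i : ℝ))^2 ≤ (1 + (d:ℝ)) * (n:ℝ)^2 := by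
      have h2 : ∑ i, ((g i : ℝ))^2 ≤ (d:ℝ) * (n:ℝ)^2 := by
        calc ∑ i, ((g i : ℝ))^2 ≤ ∑ _i : Fin d, (n:ℝ)^2 := Finset.sum_le_sum fun i _ => hsq i
          _ = (d:ℝ) * (n:ℝ)^2 := by rw [Finset.sum_const, nsmul_eq_mul, Finset.card_univ, Fintype.card_fin]
      have hn2 : (1:ℝ) ≤ (n:ℝ)^2 := by
        have h1n : (1:ℝ) ≤ (n:ℝ) := by exact_mod_cast hn
        nlinarith
      have h3 : (1 + (d:ℝ)) * (n:ℝ)^2 = (n:ℝ)^2 + (d:ℝ)*(n:ℝ)^2 := by ring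
      linarith
    rw [jbracket]
    calc Real.sqrt (1 + ∑ i, ((g i : ℝ))^2) ≤ Real.sqrt ((1 + (d:ℝ)) * (n:ℝ)^2) :=
          Real.sqrt_le_sqrt hsum2
      _ = W * n := by
          rw [Real.sqrt_mul (by positivity), Real.sqrt_sq (by positivity), hWdef]
  have hweight : ∀ n : ℕ, 1 ≤ n → ∀ g ∈ Qs n, (W*(n:ℝ)) ^ (-q) ≤ jbracket g ^ (-(p*N)) := by
    intro n hn g hg
    have h1 : jbracket g ^ (-q) ≤ jbracket g ^ (-(p*N)) :=
      Real.rpow_le_rpow_of_exponent_le (hjb1 g) (neg_le_neg (le_max_left _ _))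
    refine le_trans ?_ h1
    rw [Real.rpow_neg (hjb0 g), Real.rpow_neg (by positivity)]
    have h2 : jbracket g ^ q ≤ (W*(n:ℝ)) ^ q :=
      Real.rpow_le_rpow (hjb0 g) (hjb_ub n hn g hg) hq0
    have h3 : (0:ℝ) < jbracket g ^ q := Real.rpow_pos_of_pos (lt_of_lt_of_le one_pos (hjb1 g)) q
    exact inv_anti₀ h3 h2
  -- choose L
  obtain ⟨L, hL⟩ := exists_nat_ge (max 1 (3^d * M^p / c0 + 1))
  have hL1 : 1 ≤ L := by
    have : (1:ℝ) ≤ L := le_trans (le_max_left _ _) hL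
    exact_mod_cast this
  have hLbig : 2 * 3^(d:ℕ) * M^p ≤ (2*(L:ℝ))^d * c0 := by
    have h1 : 3^(d:ℕ) * M^p / c0 + 1 ≤ (L:ℝ) := le_trans (le_max_right _ _) hL
    have hMp : (0:ℝ) < M^p := Real.rpow_pos_of_pos hM p
    have h2 : 3^(d:ℕ) * M^p / c0 ≤ (L:ℝ) - 1 := by linarith
    have h3 : 3^(d:ℕ) * M^p ≤ ((L:ℝ) - 1) * c0 := by
      rw [div_le_iff₀ hc0] at h2; linarith
    have h4 : 2*(L:ℝ) ≤ (2*(L:ℝ))^d := by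
      have h5 : (1:ℝ) ≤ 2*(L:ℝ) := by
        have : (1:ℝ) ≤ (L:ℝ) := by exact_mod_cast hL1
        linarith
      calc 2*(L:ℝ) = (2*(L:ℝ))^1 := (pow_one _).symm
        _ ≤ (2*(L:ℝ))^d := pow_le_pow_right₀ h5 hd
    have h6 : 2*(L:ℝ) * c0 ≤ (2*(L:ℝ))^d * c0 := mul_le_mul_of_nonneg_right h4 hc0.le
    nlinarith [hc0]
  -- the summand
  set a : (Fin d → ℤ) → ℝ := fun g => ‖u g‖ ^ p * jbracket g ^ (-(p*N)) with hadef
  have ha0 : ∀ g, 0 ≤ a g := fun g =>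
    mul_nonneg (Real.rpow_nonneg (norm_nonneg _) _) (Real.rpow_nonneg (hjb0 g) _)
  have hMp : (0:ℝ) < M ^ p := Real.rpow_pos_of_pos hM p
  have hLR : (1:ℝ) ≤ (L:ℝ) := by exact_mod_cast hL1
  set c2 : ℝ := (3^d * M^p) * (W*(L:ℝ)) ^ (-q) with hc2def
  have hWL : (0:ℝ) < W*(L:ℝ) := by nlinarith
  have hc2 : 0 < c2 := by
    have h2 : (0:ℝ) < (W*(L:ℝ)) ^ (-q) := Real.rpow_pos_of_pos hWL _
    positivity
  have hAnn : ∀ n : ℕ, n0 ≤ n → 1 ≤ n → c2 ≤ ∑ g ∈ Qs (L*n) \ Qs n, a g := by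
    intro n hn0n hn1
    have hnL : n ≤ L*n := le_mul_of_one_le_left (Nat.zero_le n) hL1
    have hsub := hQmono n (L*n) hnL
    have hdiff : ∑ g ∈ Qs (L*n) \ Qs n, ‖u g‖ ^ p
        = ∑ g ∈ Qs (L*n), ‖u g‖^p - ∑ g ∈ Qs n, ‖u g‖^p := by
      rw [eq_sub_iff_add_eq, Finset.sum_sdiff hsub]
    have hlow := hSplow (L*n) (le_trans hn0n hnL)
    have hup := hSpub n
    have hnR : (1:ℝ) ≤ (n:ℝ) := by exact_mod_cast hn1
    have hnpos : (0:ℝ) < (n:ℝ) := lt_of_lt_of_le one_pos hnR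
    have e1 : (2*(L:ℝ)*(n:ℝ))^d ≤ (2*((L*n : ℕ):ℝ)+1)^d := by
      apply pow_le_pow_left₀ (by positivity)
      push_cast; linarith
    have e2 : (2*(n:ℝ)+1)^d ≤ (3*(n:ℝ))^d := pow_le_pow_left₀ (by positivity) (by linarith) d
    have e3 : 2 * 3^d * M^p * (n:ℝ)^d ≤ c0 * (2*((L*n:ℕ):ℝ)+1)^d := by
      have h4 : (2*(L:ℝ))^d * (n:ℝ)^d = (2*(L:ℝ)*(n:ℝ))^d := (mul_pow _ _ d).symm
      calc 2*3^d*M^p*(n:ℝ)^d ≤ ((2*(L:ℝ))^d * c0) * (n:ℝ)^d :=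
            mul_le_mul_of_nonneg_right hLbig (by positivity)
        _ = c0 * ((2*(L:ℝ))^d * (n:ℝ)^d) := by ring
        _ = c0 * (2*(L:ℝ)*(n:ℝ))^d := by rw [h4]
        _ ≤ c0 * (2*((L*n:ℕ):ℝ)+1)^d := mul_le_mul_of_nonneg_left e1 hc0.le
    have e4 : (2*(n:ℝ)+1)^d * M^p ≤ 3^d * M^p * (n:ℝ)^d := by
      calc (2*(n:ℝ)+1)^d * M^p ≤ (3*(n:ℝ))^d * M^p := mul_le_mul_of_nonneg_right e2 hMp.le
        _ = 3^d * M^p * (n:ℝ)^d := by rw [mul_pow]; ring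
    have e5 : 3^d * M^p * (n:ℝ)^d ≤ ∑ g ∈ Qs (L*n) \ Qs n, ‖u g‖^p := by
      rw [hdiff]; linarith [hlow, hup, e3, e4]
    have hLn1 : 1 ≤ L*n := le_trans hn1 hnL
    have e6 : ∀ g ∈ Qs (L*n) \ Qs n,
        (W*((L*n:ℕ):ℝ))^(-q) * ‖u g‖^p ≤ a g := by
      intro g hg
      have hgQ : g ∈ Qs (L*n) := (Finset.mem_sdiff.1 hg).1
      have := hweight (L*n) hLn1 g hgQ
      rw [hadef]
      calc (W*((L*n:ℕ):ℝ))^(-q) * ‖u g‖^p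
          ≤ jbracket g ^ (-(p*N)) * ‖u g‖^p :=
            mul_le_mul_of_nonneg_right this (Real.rpow_nonneg (norm_nonneg _) _)
        _ = ‖u g‖ ^ p * jbracket g ^ (-(p*N)) := by ring
    have e7 : (W*((L*n:ℕ):ℝ))^(-q) = (W*(L:ℝ))^(-q) * ((n:ℝ))^(-q) := by
      push_cast
      rw [show W*((L:ℝ)*(n:ℝ)) = (W*(L:ℝ))*(n:ℝ) by ring,
        Real.mul_rpow hWL.le hnpos.le]
    have e8 : (1:ℝ) ≤ ((n:ℝ))^(-q) * (n:ℝ)^d := by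
      rw [← Real.rpow_natCast ((n:ℝ)) d, ← Real.rpow_add hnpos]
      calc (1:ℝ) = (n:ℝ)^(0:ℝ) := (Real.rpow_zero _).symm
        _ ≤ (n:ℝ)^(-q + d) := Real.rpow_le_rpow_of_exponent_le hnR (by linarith [hqd])
    have hwpos : (0:ℝ) ≤ (W*((L*n:ℕ):ℝ))^(-q) := by
      apply Real.rpow_nonneg
      positivity
    calc c2 = (3^d * M^p) * (W*(L:ℝ))^(-q) * 1 := by rw [hc2def, mul_one]
      _ ≤ (3^d * M^p) * (W*(L:ℝ))^(-q) * (((n:ℝ))^(-q) * (n:ℝ)^d) := by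
          refine mul_le_mul_of_nonneg_left e8 ?_
          have : (0:ℝ) ≤ (W*(L:ℝ))^(-q) := (Real.rpow_pos_of_pos hWL _).le
          positivity
      _ = (W*((L*n:ℕ):ℝ))^(-q) * (3^d * M^p * (n:ℝ)^d) := by rw [e7]; ring
      _ ≤ (W*((L*n:ℕ):ℝ))^(-q) * ∑ g ∈ Qs (L*n) \ Qs n, ‖u g‖^p :=
          mul_le_mul_of_nonneg_left e5 hwpos
      _ = ∑ g ∈ Qs (L*n) \ Qs n, (W*((L*n:ℕ):ℝ))^(-q) * ‖u g‖^p := by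
          rw [Finset.mul_sum]
      _ ≤ ∑ g ∈ Qs (L*n) \ Qs n, a g := Finset.sum_le_sum e6
  -- iterate along geometric scales
  set n1 : ℕ := max n0 1 with hn1def
  have hn1a : n0 ≤ n1 := le_max_left _ _
  have hn1b : 1 ≤ n1 := le_max_right _ _
  have hgrow : ∀ j : ℕ, n0 ≤ n1 * L^j ∧ 1 ≤ n1 * L^j := by
    intro j
    have h1 : 1 ≤ L^j := Nat.one_le_pow _ _ (by omega)
    constructor
    · calc n0 ≤ n1 := hn1a
        _ = n1 * 1 := (mul_one n1).symm
        _ ≤ n1 * L^j := Nat.mul_le_mul_left n1 h1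
    · calc 1 ≤ n1 := hn1b
        _ = n1 * 1 := (mul_one n1).symm
        _ ≤ n1 * L^j := Nat.mul_le_mul_left n1 h1
  have hind : ∀ j : ℕ, (j:ℝ) * c2 ≤ ∑ g ∈ Qs (n1 * L^j), a g := by
    intro j
    induction j with
    | zero => simpa using Finset.sum_nonneg fun g _ => ha0 g
    | succ j ih =>
      have hkey := hAnn (n1 * L^j) (hgrow j).1 (hgrow j).2
      have heq : L * (n1 * L^j) = n1 * L^(j+1) := by ring
      have hsub := hQmono (n1 * L^j) (L * (n1 * L^j))
        (le_mul_of_one_le_left (Nat.zero_le _) hL1)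
      have hsplit : ∑ g ∈ Qs (L * (n1 * L^j)), a g
          = ∑ g ∈ Qs (L * (n1 * L^j)) \ Qs (n1 * L^j), a g + ∑ g ∈ Qs (n1 * L^j), a g :=
        (Finset.sum_sdiff hsub).symm
      rw [← heq]
      push_cast
      rw [hsplit]
      linarith [hkey, ih]
  have hTA : ∀ j : ℕ, ∑ g ∈ Qs (n1 * L^j), a g
      ≤ ∑' g : Fin d → ℤ, a g :=
    fun j => Summable.sum_le_tsum _ (fun g _ => ha0 g) hsum
  obtain ⟨j, hj⟩ := exists_nat_gt ((∑' g : Fin d → ℤ, a g) / c2)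
  have hfin : (∑' g : Fin d → ℤ, a g) < (j:ℝ) * c2 := by
    rw [div_lt_iff₀ hc2] at hj
    linarith
  linarith [hind j, hTA j, hfin]
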